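/- arXiv:2011.05420 — 5 statements merged into one kernel-verified Lean document; each statement's English description precedes it below -/
import Mathlib

section
/- If f : ℝ → ℂ is integrable, vanishes a.e. on some left half-line (-∞, a), and its Laplace transform Lf is bounded on the right half-plane {Re z > 0}, then f vanishes a.e. on (-∞, 0). -/
open MeasureTheory Set Complex Filter Bornology
open scoped FourierTransform Real ContDiff Topology

lemma my_decay {v : ℝ → ℂ} (hsm : ContDiff ℝ ∞ v) (hcs : HasCompactSupport v)
    (k n : ℕ) : ∃ C, ∀ x : ℝ, ‖x‖ ^ k * ‖iteratedFDeriv ℝ n v x‖ ≤ C := by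
  have hD : HasCompactSupport (iteratedFDeriv ℝ n v) := hcs.iteratedFDeriv n
  have hDc : Continuous (iteratedFDeriv ℝ n v) :=
    hsm.continuous_iteratedFDeriv (by exact_mod_cast le_top)
  have hD2 : HasCompactSupport (fun x : ℝ => ‖x‖ ^ k * ‖iteratedFDeriv ℝ n v x‖) :=
    hD.mono (fun x hx => by intro h0; apply hx; simp [h0])
  obtain ⟨C, hC⟩ := hD2.exists_bound_of_continuous ((continuous_norm.pow k).mul hDc.norm)
  exact ⟨C, fun x => le_trans (le_abs_self _) (hC x)⟩

noncomputable def mySchwartz {u : ℝ → ℝ} (hu : ContDiff ℝ ∞ u)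
    (hsupp : HasCompactSupport u) : SchwartzMap ℝ ℂ :=
  ⟨fun x => (u x : ℂ), Complex.ofRealCLM.contDiff.comp hu,
    my_decay (Complex.ofRealCLM.contDiff.comp hu)
      (hsupp.comp_left (g := fun r : ℝ => (r : ℂ)) (by simp))⟩

lemma mySchwartz_apply {u : ℝ → ℝ} (hu : ContDiff ℝ ∞ u)
    (hsupp : HasCompactSupport u) (x : ℝ) : mySchwartz hu hsupp x = (u x : ℂ) := rfl

lemma fourier_inj {g : ℝ → ℂ} (hg : Integrable g) (h : ∀ ξ : ℝ, 𝓕 g ξ = 0) :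
    ∀ᵐ t : ℝ, g t = 0 := by
  apply ae_eq_zero_of_integral_contDiff_smul_eq_zero hg.locallyIntegrable
  intro u hu hu_supp
  set ψ : SchwartzMap ℝ ℂ := mySchwartz hu hu_supp with hψ
  set Φ : SchwartzMap ℝ ℂ := (SchwartzMap.fourierTransformCLE ℝ (SchwartzMap ℝ ℂ)).symm ψ with hΦdef
  have hΦ : 𝓕 ⇑Φ = ⇑ψ := by
    have := (SchwartzMap.fourierTransformCLE ℝ (SchwartzMap ℝ ℂ)).apply_symm_apply ψ
    rw [← this]
    rfl
  have key := VectorFourier.integral_fourierIntegral_smul_eq_flip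
    (e := Real.fourierChar) (L := innerₗ ℝ) (μ := volume) (ν := volume)
    Real.continuous_fourierChar continuous_inner hg Φ.integrable
  have hflip : (innerₗ ℝ).flip = innerₗ ℝ := by
    apply LinearMap.ext; intro x; apply LinearMap.ext; intro y
    exact real_inner_comm x y
  rw [hflip] at key
  have h' : ∀ ξ : ℝ, VectorFourier.fourierIntegral Real.fourierChar volume (innerₗ ℝ) g ξ = 0 := h
  have hΦ' : ∀ x : ℝ, VectorFourier.fourierIntegral Real.fourierChar volume (innerₗ ℝ) (⇑Φ) x
      = (u x : ℂ) := by
    intro x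
    have : 𝓕 ⇑Φ x = ψ x := congrFun hΦ x
    change VectorFourier.fourierIntegral Real.fourierChar volume (innerₗ ℝ) (⇑Φ) x = ψ x at this
    rw [this, hψ, mySchwartz_apply]
  simp only [h', hΦ', zero_smul, integral_zero] at key
  have : ∫ x : ℝ, u x • g x = ∫ x : ℝ, g x • (u x : ℂ) := by
    congr 1; funext x
    simp [smul_eq_mul, mul_comm]
  rw [this, ← key]

lemma norm_cexp_neg_mul (z : ℂ) (t : ℝ) :
    ‖Complex.exp (-z * t)‖ = Real.exp (-z.re * t) := by
  rw [Complex.norm_exp]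
  congr 1
  simp

lemma norm_mul_cexp (g : ℝ → ℂ) (z : ℂ) (t : ℝ) :
    ‖g t * Complex.exp (-z * t)‖ = ‖g t‖ * Real.exp (-z.re * t) := by
  rw [norm_mul, norm_cexp_neg_mul]

lemma exp_bound {a t : ℝ} (ht : t ∈ Ico a 0) {r R : ℝ} (hr : |r| ≤ R) :
    Real.exp (-r * t) ≤ Real.exp (R * (-a)) := by
  apply Real.exp_le_exp.2
  have h1 : -r * t ≤ |r| * (-t) := by
    calc -r * t ≤ |(-r) * t| := le_abs_self _
    _ = |r| * |t| := by rw [abs_mul, abs_neg]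
    _ = |r| * (-t) := by rw [abs_of_neg ht.2]
  nlinarith [abs_nonneg r, ht.1, ht.2]

lemma integrable_mul_cexp {g : ℝ → ℂ} (hg : Integrable g) (z : ℂ) {C : ℝ}
    (hb : ∀ t : ℝ, g t ≠ 0 → Real.exp (-z.re * t) ≤ C) :
    Integrable (fun t : ℝ => g t * Complex.exp (-z * t)) := by
  apply Integrable.mono' (hg.norm.mul_const C)
  · exact hg.aestronglyMeasurable.mul (Continuous.aestronglyMeasurable (by fun_prop))
  · refine ae_of_all _ fun t => ?_
    rw [norm_mul_cexp]
    by_cases h : g t = 0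
    · simp [h]
    · exact mul_le_mul_of_nonneg_left (hb t h) (norm_nonneg _)

lemma norm_integral_mul_cexp {g : ℝ → ℂ} (hg : Integrable g) (z : ℂ) {C : ℝ}
    (hb : ∀ t : ℝ, g t ≠ 0 → Real.exp (-z.re * t) ≤ C) :
    ‖∫ t : ℝ, g t * Complex.exp (-z * t)‖ ≤ (∫ t : ℝ, ‖g t‖) * C := by
  rw [← integral_mul_const]
  apply norm_integral_le_of_norm_le (hg.norm.mul_const C)
  refine ae_of_all _ fun t => ?_
  rw [norm_mul_cexp]
  by_cases h : g t = 0
  · simp [h]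
  · exact mul_le_mul_of_nonneg_left (hb t h) (norm_nonneg _)

lemma diff_F {g : ℝ → ℂ} (hg : Integrable g) {a : ℝ} (ha : a < 0)
    (hsupp : ∀ t : ℝ, g t ≠ 0 → t ∈ Ico a 0) :
    Differentiable ℂ (fun z => ∫ t : ℝ, g t * Complex.exp (-z * t)) := by
  intro z₀
  have key := hasDerivAt_integral_of_dominated_loc_of_deriv_le (𝕜 := ℂ) (μ := (volume : Measure ℝ))
    (F := fun (z : ℂ) (t : ℝ) => g t * Complex.exp (-z * t))
    (F' := fun (z : ℂ) (t : ℝ) => g t * (Complex.exp (-z * t) * (-1 * t)))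
    (x₀ := z₀) (Metric.ball_mem_nhds z₀ one_pos)
    (Filter.Eventually.of_forall fun z =>
      hg.aestronglyMeasurable.mul (Continuous.aestronglyMeasurable (by fun_prop)))
    (integrable_mul_cexp hg z₀ (C := Real.exp (|z₀.re| * (-a)))
      (fun t h0 => exp_bound (hsupp t h0) le_rfl))
    (hg.aestronglyMeasurable.mul (Continuous.aestronglyMeasurable (by fun_prop)))
    (bound := fun t => ‖g t‖ * ((-a) * Real.exp ((‖z₀‖ + 1) * (-a))))
    ?_ (hg.norm.mul_const _) ?_
  · exact key.2.differentiableAt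
  · refine ae_of_all _ fun t z hz => ?_
    by_cases h0 : g t = 0
    · simp [h0]
    · have ht := hsupp t h0
      have hre : |z.re| ≤ ‖z₀‖ + 1 := by
        have h1 : |z.re| ≤ ‖z‖ := Complex.abs_re_le_norm z
        have h2 : ‖z‖ ≤ ‖z₀‖ + 1 := by
          have := mem_ball_iff_norm.1 hz
          calc ‖z‖ = ‖z₀ + (z - z₀)‖ := by ring_nf
          _ ≤ ‖z₀‖ + ‖z - z₀‖ := norm_add_le _ _
          _ ≤ ‖z₀‖ + 1 := by linarith
        linarith
      have hexp : Real.exp (-z.re * t) ≤ Real.exp ((‖z₀‖ + 1) * (-a)) :=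
        exp_bound ht hre
      rw [norm_mul, norm_mul, norm_cexp_neg_mul]
      have hnt : ‖(-1 * (t : ℂ))‖ = -t := by
        rw [norm_mul]
        simp [abs_of_neg ht.2]
      rw [hnt]
      have h3 : Real.exp (-z.re * t) * (-t) ≤ (-a) * Real.exp ((‖z₀‖ + 1) * (-a)) := by
        have h4 : (0:ℝ) < -t ∨ True := Or.inr trivial
        nlinarith [Real.exp_pos (-z.re * t), ht.1, ht.2, Real.exp_pos ((‖z₀‖ + 1) * (-a))]
      exact mul_le_mul_of_nonneg_left h3 (norm_nonneg _)
  · refine ae_of_all _ fun t z hz => ?_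
    exact (((((hasDerivAt_id z).neg).mul_const (t : ℂ)).cexp).const_mul (g t))

noncomputable def laplace (f : ℝ → ℂ) (z : ℂ) : ℂ :=
  ∫ t : ℝ, f t * Complex.exp (-z * t)

theorem laplace_bounded_implies_support_nonneg
    (f : ℝ → ℂ) (hf : Integrable f)
    (hsupp : ∃ a : ℝ, ∀ᵐ t : ℝ, t < a → f t = 0)
    (hbd : ∃ M : ℝ, ∀ z : ℂ, 0 < z.re → ‖laplace f z‖ ≤ M) :
    ∀ᵐ t : ℝ, t < 0 → f t = 0 := by
  obtain ⟨a₀, ha₀⟩ := hsupp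
  obtain ⟨M, hM⟩ := hbd
  set a : ℝ := min a₀ (-1) with ha_def
  have ha : a < 0 := lt_of_le_of_lt (min_le_right _ _) (by norm_num)
  have hfa : ∀ᵐ t : ℝ, t < a → f t = 0 := by
    filter_upwards [ha₀] with t ht hta
    exact ht (lt_of_lt_of_le hta (min_le_left _ _))
  set g : ℝ → ℂ := (Ico a 0).indicator f with hg_def
  have hg_int : Integrable g := hf.indicator measurableSet_Ico
  have hg_supp : ∀ t : ℝ, g t ≠ 0 → t ∈ Ico a 0 := fun t ht => by
    by_contra h
    exact ht (indicator_of_notMem h f)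
  set h : ℝ → ℂ := (Ici 0).indicator f with hh_def
  have hh_int : Integrable h := hf.indicator measurableSet_Ici
  have hh_supp : ∀ t : ℝ, h t ≠ 0 → 0 ≤ t := fun t ht => by
    by_contra hc
    exact ht (indicator_of_notMem (by simpa using hc) f)
  set F : ℂ → ℂ := fun z => ∫ t : ℝ, g t * Complex.exp (-z * t) with hF_def
  have hF_diff : Differentiable ℂ F := diff_F hg_int ha hg_supp
  -- boundedness
  have hsplit : ∀ z : ℂ, 0 < z.re →
      laplace f z = F z + ∫ t : ℝ, h t * Complex.exp (-z * t) := by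
    intro z hz
    have hint_g : Integrable (fun t : ℝ => g t * Complex.exp (-z * t)) :=
      integrable_mul_cexp hg_int z (C := Real.exp (|z.re| * (-a)))
        (fun t h0 => exp_bound (hg_supp t h0) le_rfl)
    have hint_h : Integrable (fun t : ℝ => h t * Complex.exp (-z * t)) := by
      refine integrable_mul_cexp hh_int z (C := 1) fun t h0 => ?_
      rw [← Real.exp_zero]
      apply Real.exp_le_exp.2
      have := hh_supp t h0
      nlinarith
    rw [laplace, ← integral_add hint_g hint_h]
    apply integral_congr_ae
    filter_upwards [hfa] with t ht
    have hft : f t = g t + h t := by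
      simp only [hg_def, hh_def, indicator_apply, mem_Ico, mem_Ici]
      by_cases h1 : t < a
      · rw [ht h1]
        split_ifs with h2 h3 <;> simp [ht h1]
      · push_neg at h1
        by_cases h2 : t < 0
        · rw [if_pos ⟨h1, h2⟩, if_neg (by linarith)]
          ring
        · rw [if_neg (by intro hc; exact h2 hc.2), if_pos (by linarith)]
          ring
    rw [hft]; ring
  have hFbound : ∀ z : ℂ, ‖F z‖ ≤
      max ((∫ t : ℝ, ‖g t‖) * 1) (M + (∫ t : ℝ, ‖h t‖) * 1) := by
    intro z
    rcases le_or_gt z.re 0 with hz | hz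
    · refine le_max_of_le_left ?_
      refine norm_integral_mul_cexp hg_int z fun t h0 => ?_
      rw [← Real.exp_zero]
      apply Real.exp_le_exp.2
      have := hg_supp t h0
      nlinarith [this.1, this.2]
    · refine le_max_of_le_right ?_
      have heq := hsplit z hz
      have hFz : F z = laplace f z - ∫ t : ℝ, h t * Complex.exp (-z * t) := by
        rw [heq]; ring
      rw [hFz]
      refine le_trans (norm_sub_le _ _) ?_
      have h1 := hM z hz
      have h2 : ‖∫ t : ℝ, h t * Complex.exp (-z * t)‖ ≤ (∫ t : ℝ, ‖h t‖) * 1 := by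
        refine norm_integral_mul_cexp hh_int z fun t h0 => ?_
        rw [← Real.exp_zero]
        apply Real.exp_le_exp.2
        have := hh_supp t h0
        nlinarith
      linarith
  have hb_range : IsBounded (range F) := by
    rw [isBounded_iff_forall_norm_le]
    exact ⟨_, fun x ⟨z, hz⟩ => hz ▸ hFbound z⟩
  have hconst : ∀ z : ℂ, F z = F 0 := fun z =>
    hF_diff.apply_eq_apply_of_bounded hb_range z 0
  -- limit at -infty
  have hlim : Tendsto (fun x : ℝ => F (x : ℂ)) atBot (𝓝 0) := by
    have h0 : Tendsto (fun x : ℝ => ∫ t : ℝ, g t * Complex.exp (-(x : ℂ) * t)) atBot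
        (𝓝 (∫ _ : ℝ, (0 : ℂ))) := by
      apply tendsto_integral_filter_of_dominated_convergence (bound := fun t => ‖g t‖)
      · exact Filter.Eventually.of_forall fun x =>
          hg_int.aestronglyMeasurable.mul (Continuous.aestronglyMeasurable (by fun_prop))
      · filter_upwards [eventually_le_atBot (0 : ℝ)] with x hx
        refine ae_of_all _ fun t => ?_
        rw [norm_mul_cexp]
        by_cases h0 : g t = 0
        · simp [h0]
        · have ht := hg_supp t h0
          have he : Real.exp (-(x : ℂ).re * t) ≤ 1 := by
            rw [← Real.exp_zero]
            apply Real.exp_le_exp.2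
            simp only [Complex.ofReal_re]
            nlinarith [ht.2]
          nlinarith [norm_nonneg (g t), Real.exp_pos (-(x:ℂ).re * t)]
      · exact hg_int.norm
      · refine ae_of_all _ fun t => ?_
        by_cases h0 : g t = 0
        · simp only [h0, zero_mul]
          exact tendsto_const_nhds
        · have ht := hg_supp t h0
          rw [tendsto_zero_iff_norm_tendsto_zero]
          have heq : (fun x : ℝ => ‖g t * Complex.exp (-(x : ℂ) * t)‖)
              = fun x : ℝ => ‖g t‖ * Real.exp (-x * t) := by
            funext x
            rw [norm_mul_cexp]
            simp
          rw [heq]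
          have h1 : Tendsto (fun x : ℝ => -x * t) atBot atBot := by
            have h2 : Tendsto (fun x : ℝ => x * (-t)) atBot atBot :=
              tendsto_id.atBot_mul_const (by linarith [ht.2] : (0:ℝ) < -t)
            convert h2 using 2 with x
            ring
          have h3 : Tendsto (fun x : ℝ => Real.exp (-x * t)) atBot (𝓝 0) :=
            Real.tendsto_exp_atBot.comp h1
          simpa using h3.const_mul ‖g t‖
    rw [show (0:ℂ) = ∫ _ : ℝ, (0:ℂ) from by simp]
    exact h0
  have hF0 : F 0 = 0 := by
    have h2 : Tendsto (fun x : ℝ => F (x : ℂ)) atBot (𝓝 (F 0)) := by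
      have : (fun x : ℝ => F (x : ℂ)) = fun _ => F 0 := funext fun x => hconst _
      rw [this]
      exact tendsto_const_nhds
    exact tendsto_nhds_unique h2 hlim
  have hFzero : ∀ z : ℂ, F z = 0 := fun z => (hconst z).trans hF0
  -- Fourier transform of g vanishes
  have hfour : ∀ ξ : ℝ, 𝓕 g ξ = 0 := by
    intro ξ
    have hFc : (∫ t : ℝ, g t * Complex.exp (-((((2 * π * ξ : ℝ)) : ℂ) * Complex.I) * (t : ℂ))) = 0 :=
      hFzero _
    rw [Real.fourier_real_eq_integral_exp_smul, ← hFc]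
    apply integral_congr_ae
    refine ae_of_all _ fun v => ?_
    simp only [smul_eq_mul]
    rw [mul_comm]
    congr 1
    push_cast
    ring
  have hg0 := fourier_inj hg_int hfour
  filter_upwards [hg0, hfa] with t h1 h2 ht
  rcases lt_or_ge t a with h3 | h3
  · exact h2 h3
  · have hgt : g t = f t := indicator_of_mem (show t ∈ Ico a 0 from ⟨h3, ht⟩) f
    rw [← hgt]
    exact h1
end

section
/- Uniqueness theorem for Laplace transforms: if f : ℝ → ℂ is integrable, vanishes a.e. on some (-∞, a), and its Laplace transform Lf(z) = 0 for all z with Re z > 0, then f = 0 a.e. -/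
open MeasureTheory Set FourierTransform Real Filter SchwartzMap
open scoped ContDiff

-- aux: compactly supported smooth complex function is Schwartz
lemma exists_schwartz_of_compactSupport {g : ℝ → ℂ} (hg : ContDiff ℝ ∞ g)
    (hsupp : HasCompactSupport g) : ∃ G : 𝓢(ℝ, ℂ), ⇑G = g := by
  refine ⟨⟨g, hg, fun k n => ?_⟩, rfl⟩
  have hcont : Continuous fun x : ℝ => ‖x‖ ^ k * ‖iteratedFDeriv ℝ n g x‖ := by
    exact (continuous_norm.pow k).mul (hg.continuous_iteratedFDeriv (by exact_mod_cast le_top)).norm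
  have hcs : HasCompactSupport fun x : ℝ => ‖x‖ ^ k * ‖iteratedFDeriv ℝ n g x‖ := by
    apply HasCompactSupport.mul_left
    exact (hsupp.iteratedFDeriv n).norm
  obtain ⟨C, hC⟩ := (hcont.bddAbove_range_of_hasCompactSupport hcs)
  exact ⟨C, fun x => hC ⟨x, rfl⟩⟩

theorem laplace_uniqueness
    (f : ℝ → ℂ) (hf : Integrable f)
    (hsupp : ∃ a : ℝ, ∀ᵐ t : ℝ, t < a → f t = 0)
    (hzero : ∀ z : ℂ, 0 < z.re → laplace f z = 0) :
    ∀ᵐ t : ℝ, f t = 0 := by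
  obtain ⟨a, ha⟩ := hsupp
  set h : ℝ → ℂ := fun t => f t * Complex.exp (-t) with hh
  have hmeas : AEStronglyMeasurable h := by
    exact hf.1.mul (Complex.continuous_exp.comp
      Complex.continuous_ofReal.neg).aestronglyMeasurable
  have hint : Integrable h := by
    refine Integrable.mono' (hf.norm.const_mul (Real.exp (-a))) hmeas ?_
    filter_upwards [ha] with t ht
    by_cases hta : t < a
    · simp only [hh, ht hta, zero_mul, norm_zero]
      positivity
    · push_neg at hta
      simp only [hh, norm_mul, Complex.norm_exp, Complex.neg_re,
        Complex.ofReal_re]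
      rw [mul_comm]
      exact mul_le_mul_of_nonneg_right (Real.exp_le_exp.2 (neg_le_neg hta)) (norm_nonneg _)
  -- Fourier transform of h vanishes
  have hF : ∀ ξ : ℝ, 𝓕 h ξ = 0 := by
    intro ξ
    have h1 : 𝓕 h ξ = laplace f (1 + 2 * π * ξ * Complex.I) := by
      rw [Real.fourier_real_eq_integral_exp_smul, laplace]
      congr 1 with t
      rw [smul_eq_mul, hh]
      show Complex.exp (↑(-2 * π * t * ξ) * Complex.I) * (f t * Complex.exp (-↑t))
          = f t * Complex.exp (-(1 + 2 * ↑π * ↑ξ * Complex.I) * ↑t)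
      rw [show Complex.exp (↑(-2 * π * t * ξ) * Complex.I) * (f t * Complex.exp (-↑t))
          = f t * (Complex.exp (-↑t) * Complex.exp (↑(-2 * π * t * ξ) * Complex.I)) by ring,
        ← Complex.exp_add]
      congr 2
      push_cast
      ring
    rw [h1]
    apply hzero
    simp
  -- h = 0 a.e.
  have hzeroae : ∀ᵐ t : ℝ, h t = 0 := by
    apply ae_eq_zero_of_integral_contDiff_smul_eq_zero hint.locallyIntegrable
    intro g gsmooth gsupp
    have gC : ContDiff ℝ ∞ fun t : ℝ => (g t : ℂ) :=
      Complex.ofRealCLM.contDiff.comp gsmooth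
    have gCs : HasCompactSupport fun t : ℝ => (g t : ℂ) := by
      have e : (fun t : ℝ => (g t : ℂ)) = Complex.ofReal ∘ g := rfl
      rw [e]
      exact gsupp.comp_left (g := Complex.ofReal) Complex.ofReal_zero
    obtain ⟨G, hG⟩ := exists_schwartz_of_compactSupport gC gCs
    set ψ := (FourierTransform.fourierCLE ℂ 𝓢(ℝ, ℂ)).symm G with hψ
    have hFψ : 𝓕 ⇑ψ = ⇑G := by
      rw [← SchwartzMap.fourier_coe, ← SchwartzMap.fourierTransformCLE_apply (R := ℂ) (E := 𝓢(ℝ, ℂ)), hψ,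
        (FourierTransform.fourierCLE ℂ 𝓢(ℝ, ℂ)).apply_symm_apply]
    have flip : (innerₗ ℝ).flip = innerₗ ℝ :=
      LinearMap.ext₂ fun v w => real_inner_comm v w
    have key := VectorFourier.integral_fourierIntegral_smul_eq_flip
      (L := innerₗ ℝ) (μ := volume) (ν := volume) (f := ⇑ψ) (g := h)
      Real.continuous_fourierChar (by exact continuous_inner) ψ.integrable hint
    rw [flip] at key
    have lhs : ∫ ξ : ℝ, (VectorFourier.fourierIntegral 𝐞 volume (innerₗ ℝ) ⇑ψ ξ) • h ξ
        = ∫ x : ℝ, g x • h x := by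
      congr 1 with ξ
      have : VectorFourier.fourierIntegral 𝐞 volume (innerₗ ℝ) ⇑ψ ξ = 𝓕 ⇑ψ ξ := rfl
      rw [this, hFψ, hG, smul_eq_mul, Complex.real_smul]
    have rhs : ∫ x : ℝ, ψ x • VectorFourier.fourierIntegral 𝐞 volume (innerₗ ℝ) h x = 0 := by
      have : ∀ x : ℝ, VectorFourier.fourierIntegral 𝐞 volume (innerₗ ℝ) h x = 𝓕 h x :=
        fun x => rfl
      simp [this, hF]
    rw [lhs, rhs] at key
    exact key
  -- conclude
  filter_upwards [hzeroae] with t ht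
  have : Complex.exp (-t) ≠ 0 := Complex.exp_ne_zero _
  exact (mul_eq_zero.1 ht).resolve_right this
end

section
/- If f, g : ℝ → ℂ are integrable and each vanishes a.e. on some left half-line, then L(f*g)(z) = Lf(z) · Lg(z) for all z in the right half-plane {Re z > 0}. -/
open MeasureTheory Set
open scoped Convolution

noncomputable def conv (f g : ℝ → ℂ) (t : ℝ) : ℂ := ∫ s : ℝ, f (t - s) * g s

lemma exp_integrable_aux (f : ℝ → ℂ) (hf : Integrable f) (a : ℝ)
    (hfa : ∀ᵐ t : ℝ, t < a → f t = 0) (z : ℂ) (hz : 0 < z.re) :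
    Integrable (fun t : ℝ => f t * Complex.exp (-z * t)) := by
  apply Integrable.mono' (g := fun t : ℝ => ‖f t‖ * Real.exp (-z.re * a))
    (hf.norm.mul_const _)
  · exact hf.1.mul ((Complex.continuous_exp.comp (by continuity)).aestronglyMeasurable)
  · filter_upwards [hfa] with t ht
    by_cases h : t < a
    · simp only [ht h, zero_mul, norm_zero]
      positivity
    · push_neg at h
      rw [norm_mul]
      have he : ‖Complex.exp (-z * t)‖ = Real.exp (-(z.re * t)) := by
        rw [Complex.norm_exp]
        congr 1
        simp [Complex.mul_re]
      rw [he]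
      refine mul_le_mul_of_nonneg_left (Real.exp_le_exp.mpr ?_) (norm_nonneg _)
      nlinarith

theorem laplace_convolution
    (f g : ℝ → ℂ) (hf : Integrable f) (hg : Integrable g)
    (hfa : ∃ a : ℝ, ∀ᵐ t : ℝ, t < a → f t = 0)
    (hgb : ∃ b : ℝ, ∀ᵐ t : ℝ, t < b → g t = 0) :
    ∀ z : ℂ, 0 < z.re → laplace (conv f g) z = laplace f z * laplace g z := by
  intro z hz
  obtain ⟨a, hfa⟩ := hfa
  obtain ⟨b, hgb⟩ := hgb
  set F : ℝ → ℂ := fun t => f t * Complex.exp (-z * t) with hF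
  set G : ℝ → ℂ := fun t => g t * Complex.exp (-z * t) with hG
  have hFi : Integrable F := exp_integrable_aux f hf a hfa z hz
  have hGi : Integrable G := exp_integrable_aux g hg b hgb z hz
  have key : ∫ t : ℝ, (F ⋆[ContinuousLinearMap.mul ℂ ℂ] G) t
      = (∫ t, F t) * (∫ t, G t) := by
    rw [integral_convolution (L := ContinuousLinearMap.mul ℂ ℂ) hFi hGi]
    simp
  have hconv : ∀ t : ℝ, (F ⋆[ContinuousLinearMap.mul ℂ ℂ] G) t
      = conv f g t * Complex.exp (-z * t) := by
    intro t
    have h1 : conv f g t = ∫ s : ℝ, f s * g (t - s) := by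
      rw [conv]
      have h2 := integral_sub_left_eq_self (fun s : ℝ => f s * g (t - s)) volume t
      simp only [sub_sub_cancel] at h2
      exact h2
    rw [h1, convolution_def]
    rw [← integral_mul_const]
    congr 1
    ext s
    simp only [ContinuousLinearMap.mul_apply', hF, hG]
    rw [mul_mul_mul_comm, ← Complex.exp_add]
    congr 2
    push_cast
    ring
  have h2 : laplace (conv f g) z = ∫ t : ℝ, (F ⋆[ContinuousLinearMap.mul ℂ ℂ] G) t := by
    rw [laplace]
    congr 1
    ext t
    rw [hconv]
  rw [h2, key, laplace, laplace]
end

section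
/- Let F and G be holomorphic functions on the right half-plane ℍ = {Re z > 0} satisfying |F(z)| ≤ A e^{a Re z} and |G(z)| ≤ B e^{b Re z} for some positive constants A, a, B, b. If both F and G are unbounded on ℍ, then the product FG is also unbounded on ℍ. -/
open Complex

lemma hasDerivAt_conj_conj {G : ℂ → ℂ} {g' z : ℂ}
    (h : HasDerivAt G g' ((starRingEnd ℂ) z)) :
    HasDerivAt (fun w => (starRingEnd ℂ) (G ((starRingEnd ℂ) w))) ((starRingEnd ℂ) g') z := by
  rw [hasDerivAt_iff_tendsto_slope] at h ⊢
  have h1 : Filter.Tendsto (starRingEnd ℂ) (nhdsWithin z {z}ᶜ)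
      (nhdsWithin ((starRingEnd ℂ) z) {(starRingEnd ℂ) z}ᶜ) := by
    rw [tendsto_nhdsWithin_iff]
    refine ⟨(Complex.continuous_conj.tendsto z).mono_left nhdsWithin_le_nhds, ?_⟩
    filter_upwards [self_mem_nhdsWithin] with w hw
    simpa using fun hc => hw ((starRingEnd ℂ).injective hc)
  have h2 : slope (fun w => (starRingEnd ℂ) (G ((starRingEnd ℂ) w))) z
      = fun w => (starRingEnd ℂ) (slope G ((starRingEnd ℂ) z) ((starRingEnd ℂ) w)) := by
    funext w
    simp [slope_def_field, map_div₀, map_sub]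
  rw [h2]
  exact ((Complex.continuous_conj.tendsto g').comp (h.comp h1))

lemma line_sup_large (H : ℂ → ℂ) (A a : ℝ) (hA : 0 < A) (ha : 0 < a)
    (hd : DifferentiableOn ℂ H {z : ℂ | 0 < z.re})
    (hbd : ∀ z : ℂ, 0 < z.re → ‖H z‖ ≤ A * Real.exp (a * z.re))
    (hub : ¬ ∃ M : ℝ, ∀ z : ℂ, 0 < z.re → ‖H z‖ ≤ M) (K : ℝ) :
    ∃ X : ℝ, ∀ x ≥ X, ∃ z : ℂ, z.re = x ∧ K < ‖H z‖ := by
  by_contra hc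
  push_neg at hc
  apply hub
  refine ⟨max (A * Real.exp a) K, fun z hz => ?_⟩
  rcases le_or_gt z.re 1 with h1 | h1
  · refine le_max_of_le_left ((hbd z hz).trans ?_)
    have : a * z.re ≤ a * 1 := by nlinarith
    have := Real.exp_le_exp.2 this
    rw [mul_one] at this
    nlinarith [Real.exp_pos (a * z.re)]
  · obtain ⟨x, hx, hline⟩ := hc (z.re + 1)
    have hx1 : 1 < x := by linarith
    have hzx : z.re ≤ x := by linarith
    have hsub : (Complex.re ⁻¹' Set.Ioo 1 x) ⊆ {z : ℂ | 0 < z.re} :=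
      fun y hy => lt_trans one_pos hy.1
    have hsub' : closure (Complex.re ⁻¹' Set.Ioo 1 x) ⊆ {z : ℂ | 0 < z.re} := by
      have hcl : closure (Complex.re ⁻¹' Set.Ioo 1 x) ⊆ Complex.re ⁻¹' Set.Icc 1 x :=
        closure_minimal (fun y hy => ⟨hy.1.le, hy.2.le⟩)
          (isClosed_Icc.preimage Complex.continuous_re)
      exact hcl.trans fun y hy => lt_of_lt_of_le one_pos hy.1
    refine PhragmenLindelof.vertical_strip (a := 1) (b := x)
      ⟨hd.mono hsub, (hd.continuousOn).mono hsub'⟩ ?_ ?_ ?_ h1.le hzx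
    · refine ⟨0, div_pos Real.pi_pos (by linarith), 0, ?_⟩
      rw [Asymptotics.isBigO_iff]
      refine ⟨A * Real.exp (a * x), ?_⟩
      rw [Filter.eventually_inf_principal]
      refine Filter.Eventually.of_forall fun y hy => ?_
      have h0 : 0 < y.re := lt_trans one_pos hy.1
      have : ‖H y‖ ≤ A * Real.exp (a * x) := by
        refine (hbd y h0).trans ?_
        have : a * y.re ≤ a * x := by nlinarith [hy.2]
        nlinarith [Real.exp_le_exp.2 this, Real.exp_pos (a * y.re)]
      simpa using this
    · intro y hy
      refine le_max_of_le_left ((hbd y (by rw [hy]; norm_num)).trans ?_)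
      rw [hy, mul_one]
    · intro y hy
      exact le_max_of_le_right (hline y hy)

lemma key_bound (F G : ℂ → ℂ) (A a B b M : ℝ)
    (hA : 0 < A) (ha : 0 < a) (hB : 0 < B) (hb : 0 < b)
    (hF : DifferentiableOn ℂ F {z : ℂ | 0 < z.re})
    (hG : DifferentiableOn ℂ G {z : ℂ | 0 < z.re})
    (hFbd : ∀ z : ℂ, 0 < z.re → ‖F z‖ ≤ A * Real.exp (a * z.re))
    (hGbd : ∀ z : ℂ, 0 < z.re → ‖G z‖ ≤ B * Real.exp (b * z.re))
    (hM : ∀ z : ℂ, 0 < z.re → ‖F z * G z‖ ≤ M)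
    (z w : ℂ) (hzw : z.re = w.re) (hz1 : 1 < z.re) :
    ‖F z‖ * ‖G w‖ ≤ max M (A * B * Real.exp (a + b)) := by
  set τ : ℝ := z.im + w.im with hτ
  set u₀ : ℂ := 1 + (τ / 2) * I with hu₀
  have hu₀re : u₀.re = 1 := by simp [hu₀]
  have hu₀im : u₀.im = τ / 2 := by simp [hu₀]
  set Φ : ℂ → ℂ := fun ζ => F (ζ + u₀) * (starRingEnd ℂ) (G ((starRingEnd ℂ) ζ + u₀)) with hΦ
  set C : ℝ := max M (A * B * Real.exp (a + b)) with hC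
  have hopen : IsOpen {z : ℂ | 0 < z.re} := isOpen_lt continuous_const Complex.continuous_re
  -- differentiability of Φ
  have hΦdiff : ∀ ζ : ℂ, -1 < ζ.re → DifferentiableAt ℂ Φ ζ := by
    intro ζ hζ
    have h1 : 0 < (ζ + u₀).re := by rw [Complex.add_re, hu₀re]; linarith
    have hF1 : DifferentiableAt ℂ (fun ξ => F (ξ + u₀)) ζ :=
      (hF.differentiableAt (hopen.mem_nhds h1)).comp ζ (differentiableAt_id.add_const u₀)
    have h2 : 0 < ((starRingEnd ℂ) (ζ + (starRingEnd ℂ) u₀)).re := by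
      rw [Complex.conj_re, Complex.add_re, Complex.conj_re, hu₀re]; linarith
    have hGd : DifferentiableAt ℂ G ((starRingEnd ℂ) (ζ + (starRingEnd ℂ) u₀)) :=
      hG.differentiableAt (hopen.mem_nhds h2)
    have hΨ : DifferentiableAt ℂ (fun ξ => (starRingEnd ℂ) (G ((starRingEnd ℂ) ξ)))
        (ζ + (starRingEnd ℂ) u₀) := (hasDerivAt_conj_conj hGd.hasDerivAt).differentiableAt
    have hG2 : DifferentiableAt ℂ
        (fun ξ => (starRingEnd ℂ) (G ((starRingEnd ℂ) (ξ + (starRingEnd ℂ) u₀)))) ζ :=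
      hΨ.comp (f := fun ξ => ξ + (starRingEnd ℂ) u₀) ζ (differentiableAt_id.add_const _)
    have heq : (fun ξ => (starRingEnd ℂ) (G ((starRingEnd ℂ) ξ + u₀)))
        = fun ξ => (starRingEnd ℂ) (G ((starRingEnd ℂ) (ξ + (starRingEnd ℂ) u₀))) := by
      funext ξ; simp [map_add]
    rw [hΦ]
    exact hF1.mul (heq ▸ hG2)
  -- norm of Φ
  have hΦnorm : ∀ ζ : ℂ, ‖Φ ζ‖ = ‖F (ζ + u₀)‖ * ‖G ((starRingEnd ℂ) ζ + u₀)‖ := by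
    intro ζ; rw [hΦ]; simp [norm_mul]
  -- growth bound
  have hgrow : ∀ ζ : ℂ, 0 < ζ.re →
      ‖Φ ζ‖ ≤ (A * B * Real.exp (a + b)) * Real.exp ((a + b) * ‖ζ‖) := by
    intro ζ hζ
    have h1 : 0 < (ζ + u₀).re := by rw [Complex.add_re, hu₀re]; linarith
    have h2 : ((starRingEnd ℂ) ζ + u₀).re = ζ.re + 1 := by
      rw [Complex.add_re, Complex.conj_re, hu₀re]
    have hb1 := hFbd _ h1
    have hb2 := hGbd _ (by rw [h2]; linarith)
    rw [Complex.add_re, hu₀re] at hb1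
    rw [h2] at hb2
    have habs : ζ.re ≤ ‖ζ‖ := Complex.re_le_norm ζ
    have hexp : Real.exp (a * (ζ.re + 1)) * Real.exp (b * (ζ.re + 1))
        ≤ Real.exp (a + b) * Real.exp ((a + b) * ‖ζ‖) := by
      rw [← Real.exp_add, ← Real.exp_add]
      apply Real.exp_le_exp.2
      nlinarith
    calc ‖Φ ζ‖ = ‖F (ζ + u₀)‖ * ‖G ((starRingEnd ℂ) ζ + u₀)‖ := hΦnorm ζ
      _ ≤ (A * Real.exp (a * (ζ.re + 1))) * (B * Real.exp (b * (ζ.re + 1))) := by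
          apply mul_le_mul hb1 hb2 (norm_nonneg _)
          positivity
      _ = (A * B) * (Real.exp (a * (ζ.re + 1)) * Real.exp (b * (ζ.re + 1))) := by ring
      _ ≤ (A * B) * (Real.exp (a + b) * Real.exp ((a + b) * ‖ζ‖)) :=
          mul_le_mul_of_nonneg_left hexp (by positivity)
      _ = (A * B * Real.exp (a + b)) * Real.exp ((a + b) * ‖ζ‖) := by ring
  -- bound on the real axis
  have hre : ∀ t : ℝ, 0 ≤ t → ‖Φ (t : ℂ)‖ ≤ C := by
    intro t ht
    have hconj : (starRingEnd ℂ) (t : ℂ) = (t : ℂ) := Complex.conj_ofReal t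
    have h1 : 0 < ((t : ℂ) + u₀).re := by
      rw [Complex.add_re, hu₀re, Complex.ofReal_re]; linarith
    have : ‖Φ (t : ℂ)‖ = ‖F ((t : ℂ) + u₀) * G ((t : ℂ) + u₀)‖ := by
      rw [hΦnorm, hconj, norm_mul]
    rw [this]
    exact le_max_of_le_left (hM _ h1)
  -- bound on the imaginary axis (all t)
  have him : ∀ t : ℝ, ‖Φ ((t : ℂ) * I)‖ ≤ C := by
    intro t
    have h1 : ((t : ℂ) * I + u₀).re = 1 := by
      simp [Complex.add_re, hu₀re]
    have h2 : ((starRingEnd ℂ) ((t : ℂ) * I) + u₀).re = 1 := by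
      simp [Complex.add_re, hu₀re]
    have hb1 := hFbd _ (by rw [h1]; norm_num)
    have hb2 := hGbd _ (by rw [h2]; norm_num)
    rw [h1, mul_one] at hb1
    rw [h2, mul_one] at hb2
    refine le_max_of_le_right ?_
    calc ‖Φ ((t : ℂ) * I)‖
        = ‖F ((t : ℂ) * I + u₀)‖ * ‖G ((starRingEnd ℂ) ((t : ℂ) * I) + u₀)‖ := hΦnorm _
      _ ≤ (A * Real.exp a) * (B * Real.exp b) := by
          apply mul_le_mul hb1 hb2 (norm_nonneg _); positivity
      _ = A * B * Real.exp (a + b) := by rw [Real.exp_add]; ring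
  -- DiffContOnCl on quadrants
  have hdiffQ : ∀ s : Set ℝ, DiffContOnCl ℂ Φ (Set.Ioi 0 ×ℂ s) := by
    intro s
    constructor
    · intro ζ hζ
      exact (hΦdiff ζ (by have := (Complex.mem_reProdIm.1 hζ).1; simp at this; linarith)).differentiableWithinAt
    · intro ζ hζ
      have hsub : (Set.Ioi (0:ℝ) ×ℂ s) ⊆ Complex.re ⁻¹' Set.Ici 0 := by
        intro y hy
        exact le_of_lt (Set.mem_Ioi.1 (Complex.mem_reProdIm.1 hy).1)
      have hcl : ζ ∈ Complex.re ⁻¹' Set.Ici 0 :=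
        closure_minimal hsub (isClosed_Ici.preimage Complex.continuous_re) hζ
      have : -1 < ζ.re := lt_of_lt_of_le (by norm_num) hcl
      exact (hΦdiff ζ this).continuousAt.continuousWithinAt
  -- growth in IsBigO form
  have hBig : ∀ s : Set ℝ, ∃ c < (2:ℝ), ∃ B',
      Φ =O[Bornology.cobounded ℂ ⊓ Filter.principal (Set.Ioi 0 ×ℂ s)]
        fun ζ => Real.exp (B' * ‖ζ‖ ^ c) := by
    intro s
    refine ⟨1, one_lt_two, a + b, ?_⟩
    rw [Asymptotics.isBigO_iff]
    refine ⟨A * B * Real.exp (a + b), ?_⟩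
    rw [Filter.eventually_inf_principal]
    refine Filter.Eventually.of_forall fun ζ hζ => ?_
    have h0 : 0 < ζ.re := (Complex.mem_reProdIm.1 hζ).1
    have := hgrow ζ h0
    rw [Real.norm_of_nonneg (Real.exp_pos _).le, Real.rpow_one]
    exact this
  -- apply quadrant PL at ζ₀ = z - u₀
  set ζ₀ : ℂ := z - u₀ with hζ₀
  have hζ₀re : 0 ≤ ζ₀.re := by
    rw [hζ₀, Complex.sub_re, hu₀re]; linarith
  have harg1 : ζ₀ + u₀ = z := by rw [hζ₀]; ring
  have harg2 : (starRingEnd ℂ) ζ₀ + u₀ = w := by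
    apply Complex.ext
    · rw [Complex.add_re, Complex.conj_re, hζ₀, Complex.sub_re, hu₀re, hzw]; ring
    · rw [Complex.add_im, Complex.conj_im, hζ₀, Complex.sub_im, hu₀im, hτ]; ring
  have hΦζ₀ : ‖Φ ζ₀‖ = ‖F z‖ * ‖G w‖ := by rw [hΦnorm, harg1, harg2]
  rw [← hΦζ₀]
  rcases le_or_gt 0 ζ₀.im with him0 | him0
  · exact PhragmenLindelof.quadrant_I (hdiffQ _) (hBig _) hre (fun t ht => him t) hζ₀re him0
  · exact PhragmenLindelof.quadrant_IV (hdiffQ _) (hBig _) hre (fun t ht => him t) hζ₀re him0.le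

theorem product_unbounded
    (F G : ℂ → ℂ) (A a B b : ℝ)
    (hA : 0 < A) (ha : 0 < a) (hB : 0 < B) (hb : 0 < b)
    (hF : DifferentiableOn ℂ F {z : ℂ | 0 < z.re})
    (hG : DifferentiableOn ℂ G {z : ℂ | 0 < z.re})
    (hFbd : ∀ z : ℂ, 0 < z.re → ‖F z‖ ≤ A * Real.exp (a * z.re))
    (hGbd : ∀ z : ℂ, 0 < z.re → ‖G z‖ ≤ B * Real.exp (b * z.re))
    (hFub : ¬ ∃ M : ℝ, ∀ z : ℂ, 0 < z.re → ‖F z‖ ≤ M)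
    (hGub : ¬ ∃ M : ℝ, ∀ z : ℂ, 0 < z.re → ‖G z‖ ≤ M) :
    ¬ ∃ M : ℝ, ∀ z : ℂ, 0 < z.re → ‖F z * G z‖ ≤ M := by
  rintro ⟨M, hM⟩
  set C : ℝ := max M (A * B * Real.exp (a + b)) with hC
  have hC0 : 0 < C := lt_of_lt_of_le (by positivity) (le_max_right _ _)
  set K : ℝ := C + 1 with hK
  have hK1 : 1 ≤ K := by linarith
  obtain ⟨XF, hXF⟩ := line_sup_large F A a hA ha hF hFbd hFub K
  obtain ⟨XG, hXG⟩ := line_sup_large G B b hB hb hG hGbd hGub K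
  set x : ℝ := max (max XF XG) 2 with hx
  have hx2 : (2:ℝ) ≤ x := le_max_right _ _
  obtain ⟨z, hzre, hzK⟩ := hXF x (le_trans (le_max_left _ _) (le_max_left _ _))
  obtain ⟨w, hwre, hwK⟩ := hXG x (le_trans (le_max_right _ _) (le_max_left _ _))
  have hzw : z.re = w.re := by rw [hzre, hwre]
  have hz1 : 1 < z.re := by rw [hzre]; linarith
  have hkey := key_bound F G A a B b M hA ha hB hb hF hG hFbd hGbd hM z w hzw hz1
  rw [← hC] at hkey
  have : K * K ≤ ‖F z‖ * ‖G w‖ := by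
    apply mul_le_mul hzK.le hwK.le (by linarith) (norm_nonneg _)
  nlinarith
end

section
/- Let f : ℝ → ℂ be integrable and supported on a compact subset of (-∞, 0]. If the entire function Lf(z) = ∫ f(t) e^{-zt} dt is bounded on all of ℂ, then Lf is constant equal to 0 and f = 0 a.e. -/
open MeasureTheory Set

open Topology Filter FourierTransform
open scoped ContDiff

lemma norm_cexp_neg_mul_real (z : ℂ) (t : ℝ) :
    ‖Complex.exp (-z * t)‖ = Real.exp (-(z.re * t)) := by
  rw [Complex.norm_exp]
  congr 1
  simp [Complex.mul_re]

lemma decay_of_compactSupport {g : ℝ → ℂ} (hg : ContDiff ℝ ∞ g) (h : HasCompactSupport g)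
    (k n : ℕ) : ∃ C, ∀ x : ℝ, ‖x‖ ^ k * ‖iteratedFDeriv ℝ n g x‖ ≤ C := by
  have h1 : Continuous fun x : ℝ => ‖x‖ ^ k * ‖iteratedFDeriv ℝ n g x‖ :=
    ((continuous_norm.pow k)).mul
      (hg.continuous_iteratedFDeriv (by exact_mod_cast le_top)).norm
  have h2 : HasCompactSupport fun x : ℝ => ‖x‖ ^ k * ‖iteratedFDeriv ℝ n g x‖ :=
    ((h.iteratedFDeriv n).norm).mul_left
  obtain ⟨C, hC⟩ := h1.bounded_above_of_compact_support h2
  exact ⟨C, fun x => (le_abs_self _).trans ((Real.norm_eq_abs _) ▸ hC x)⟩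

theorem laplace_bounded_entire_eq_zero
    (f : ℝ → ℂ) (hf : Integrable f)
    (K : Set ℝ) (hK : IsCompact K) (hK0 : K ⊆ Iic 0)
    (hsupp : ∀ t ∉ K, f t = 0)
    (hbd : ∃ M : ℝ, ∀ z : ℂ, ‖laplace f z‖ ≤ M) :
    (∀ z : ℂ, laplace f z = 0) ∧ ∀ᵐ t : ℝ, f t = 0 := by
  obtain ⟨r, hr⟩ := hK.isBounded.subset_closedBall 0
  have habs : ∀ t ∈ K, |t| ≤ |r| := by
    intro t ht
    have := hr ht
    rw [Metric.mem_closedBall, Real.dist_eq, sub_zero] at this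
    exact this.trans (le_abs_self r)
  -- integrability of the integrand of laplace
  have hint : ∀ z : ℂ, Integrable (fun t : ℝ => f t * Complex.exp (-z * t)) := by
    intro z
    refine Integrable.mono' (hf.norm.mul_const (Real.exp (‖z‖ * |r|)))
      (hf.1.mul (Continuous.aestronglyMeasurable (by fun_prop))) ?_
    filter_upwards with t
    by_cases ht : t ∈ K
    · rw [norm_mul, norm_cexp_neg_mul_real]
      refine mul_le_mul_of_nonneg_left ?_ (norm_nonneg _)
      rw [Real.exp_le_exp]
      calc -(z.re * t) ≤ |z.re * t| := neg_le_abs _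
        _ = |z.re| * |t| := abs_mul _ _
        _ ≤ ‖z‖ * |r| :=
            mul_le_mul (Complex.abs_re_le_norm z) (habs t ht) (abs_nonneg _)
              (norm_nonneg z)
    · rw [hsupp t ht]
      simp
  -- laplace f is entire
  have hder : ∀ z₀ : ℂ, HasDerivAt (laplace f)
      (∫ t : ℝ, f t * (Complex.exp (-z₀ * t) * (-t))) z₀ := by
    intro z₀
    set C : ℝ := Real.exp ((‖z₀‖ + 1) * |r|) * |r| with hC
    have := hasDerivAt_integral_of_dominated_loc_of_deriv_le
      (F := fun (z : ℂ) (t : ℝ) => f t * Complex.exp (-z * t))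
      (F' := fun (z : ℂ) (t : ℝ) => f t * (Complex.exp (-z * t) * (-t)))
      (x₀ := z₀) (bound := fun t => ‖f t‖ * C) (s := Metric.ball z₀ 1) (Metric.ball_mem_nhds z₀ one_pos)
      (Filter.Eventually.of_forall fun z => (hint z).1)
      (hint z₀)
      (hf.1.mul (Continuous.aestronglyMeasurable (by fun_prop)))
      ?_ (hf.norm.mul_const C) ?_
    · exact this.2
    · filter_upwards with t
      intro z hz
      by_cases ht : t ∈ K
      · have hz' : ‖z‖ ≤ ‖z₀‖ + 1 := by
          have hz2 := mem_ball_iff_norm.1 hz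
          calc ‖z‖ = ‖z₀ + (z - z₀)‖ := by ring_nf
            _ ≤ ‖z₀‖ + ‖z - z₀‖ := norm_add_le _ _
            _ ≤ ‖z₀‖ + 1 := by linarith
        rw [norm_mul, norm_mul, norm_cexp_neg_mul_real]
        refine mul_le_mul_of_nonneg_left ?_ (norm_nonneg _)
        have hnt : ‖(-(t:ℂ))‖ = |t| := by
          rw [← Complex.ofReal_neg, Complex.norm_real, Real.norm_eq_abs, abs_neg]
        rw [hnt, hC]
        refine mul_le_mul ?_ (habs t ht) (abs_nonneg _) (Real.exp_nonneg _)
        rw [Real.exp_le_exp]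
        calc -(z.re * t) ≤ |z.re * t| := neg_le_abs _
          _ = |z.re| * |t| := abs_mul _ _
          _ ≤ (‖z₀‖ + 1) * |r| :=
              mul_le_mul ((Complex.abs_re_le_norm z).trans hz') (habs t ht)
                (abs_nonneg _) (by positivity)
      · rw [hsupp t ht]
        simp
    · filter_upwards with t
      intro z hz
      have h1 : HasDerivAt (fun w : ℂ => -w * (t : ℂ)) (-1 * t) z :=
        (hasDerivAt_id z).neg.mul_const _
      have h2 := (h1.cexp).const_mul (f t)
      simpa using h2
  have hdiff : Differentiable ℂ (laplace f) := fun z => (hder z).differentiableAt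
  obtain ⟨M, hM⟩ := hbd
  have hb : Bornology.IsBounded (Set.range (laplace f)) := by
    rw [isBounded_iff_forall_norm_le]
    exact ⟨M, by rintro x ⟨z, rfl⟩; exact hM z⟩
  -- laplace f tends to 0 along the real axis at -∞
  have htend : Filter.Tendsto (fun x : ℝ => laplace f ↑x) Filter.atBot (𝓝 0) := by
    have h0 : (0 : ℂ) = ∫ _ : ℝ, (0 : ℂ) := by simp
    rw [h0]
    apply tendsto_integral_filter_of_dominated_convergence (fun t => ‖f t‖)
    · exact Filter.Eventually.of_forall fun x => (hint x).1
    · filter_upwards [Filter.Iic_mem_atBot (0 : ℝ)] with x hx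
      filter_upwards with t
      by_cases ht : t ∈ K
      · rw [norm_mul, norm_cexp_neg_mul_real, Complex.ofReal_re]
        calc ‖f t‖ * Real.exp (-(x * t)) ≤ ‖f t‖ * 1 := by
              refine mul_le_mul_of_nonneg_left ?_ (norm_nonneg _)
              rw [Real.exp_le_one_iff]
              have : 0 ≤ x * t := by nlinarith [mul_nonneg (neg_nonneg.2 (mem_Iic.1 hx)) (neg_nonneg.2 (hK0 ht))]
              linarith
          _ = ‖f t‖ := mul_one _
      · rw [hsupp t ht]
        simp
    · exact hf.norm
    · have h0' : ∀ᵐ t : ℝ, t ≠ 0 := by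
        rw [ae_iff]
        convert Real.volume_singleton (a := 0) using 2
        ext t; simp
      filter_upwards [h0'] with t ht0
      by_cases ht : t ∈ K
      · have htneg : t < 0 := lt_of_le_of_ne (hK0 ht) ht0
        rw [tendsto_zero_iff_norm_tendsto_zero]
        have heq : (fun x : ℝ => ‖f t * Complex.exp (-(x:ℂ) * t)‖)
            = fun x : ℝ => ‖f t‖ * Real.exp (x * -t) := by
          funext x
          rw [norm_mul, norm_cexp_neg_mul_real, Complex.ofReal_re]
          congr 1
          ring
        rw [heq]
        have h2 : Filter.Tendsto (fun x : ℝ => x * -t) Filter.atBot Filter.atBot :=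
          Filter.tendsto_id.atBot_mul_const (by linarith)
        simpa using (Real.tendsto_exp_atBot.comp h2).const_mul ‖f t‖
      · simp only [hsupp t ht, zero_mul]
        exact tendsto_const_nhds
  have hzero : ∀ z : ℂ, laplace f z = 0 := by
    intro z
    have hconst : ∀ x : ℝ, laplace f ↑x = laplace f z := fun x =>
      hdiff.apply_eq_apply_of_bounded hb _ _
    have h1 : Filter.Tendsto (fun _ : ℝ => laplace f z) Filter.atBot (𝓝 0) :=
      htend.congr fun x => hconst x
    exact tendsto_nhds_unique tendsto_const_nhds h1
  refine ⟨hzero, ?_⟩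
  apply ae_eq_zero_of_integral_contDiff_smul_eq_zero hf.locallyIntegrable
  intro g hg hgsupp
  set gc : ℝ → ℂ := fun x => (g x : ℂ) with hgc
  have hgc_smooth : ContDiff ℝ ∞ gc := Complex.ofRealCLM.contDiff.comp hg
  have hgc_supp : HasCompactSupport gc := hgsupp.comp_left Complex.ofReal_zero
  let φ : SchwartzMap ℝ ℂ := ⟨gc, hgc_smooth, decay_of_compactSupport hgc_smooth hgc_supp⟩
  let ψ : SchwartzMap ℝ ℂ := (FourierTransform.fourierCLE ℂ (SchwartzMap ℝ ℂ)).symm φ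
  have hψ : 𝓕 (⇑ψ : ℝ → ℂ) = ⇑φ := by
    rw [← SchwartzMap.fourier_coe, ← FourierTransform.fourierCLE_apply (R := ℂ) ψ,
      (FourierTransform.fourierCLE ℂ (SchwartzMap ℝ ℂ)).apply_symm_apply φ]
  have hflip : ∀ x : ℝ,
      VectorFourier.fourierIntegral 𝐞 volume (innerₗ ℝ) f x = 0 := by
    intro x
    have heq : VectorFourier.fourierIntegral 𝐞 volume (innerₗ ℝ) f x
        = laplace f (2 * Real.pi * x * Complex.I) := by
      rw [VectorFourier.fourierIntegral, laplace]
      congr 1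
      funext t
      rw [Circle.smul_def, Real.fourierChar_apply]
      simp only [innerₗ_apply_apply, RCLike.inner_apply, conj_trivial]
      rw [show ((2 * Real.pi * -(x * t) : ℝ) : ℂ) * Complex.I
          = -(2 * ↑Real.pi * ↑x * Complex.I) * ↑t by push_cast; ring]
      exact mul_comm _ _
    rw [heq]; exact hzero _
  have mult := VectorFourier.integral_fourierIntegral_smul_eq_flip
    (e := 𝐞) (L := innerₗ ℝ) (μ := volume) (ν := volume)
    Real.continuous_fourierChar continuous_inner ψ.integrable hf
  calc ∫ x : ℝ, g x • f x = ∫ ξ : ℝ, (𝓕 (⇑ψ : ℝ → ℂ)) ξ • f ξ := by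
        rw [hψ]
        congr 1
    _ = ∫ x : ℝ, ψ x • VectorFourier.fourierIntegral 𝐞 volume (innerₗ ℝ).flip f x := mult
    _ = 0 := by simp only [flip_innerₗ]; simp [hflip]
end
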